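/- Let G = ℤ ⊕ ℤ/2^j with torsion form b = ⟨1/2^j⟩ on T = ℤ/2^j (b(x,y) = xy/2^j) and p = (2^j, 2^{j-1}) with j ≥ 2. Then for every t ∈ T and every k ∈ S_{d_π} (where d_π = 2^j), Δ(k,t) = d_π² b(t,t) - 2 d_π b(p - d_π k, t) ≡ 0 mod 2^{j+1}, i.e. the homomorphism P : Aut_b(G) → ℚ/2^{j+1}ℤ is identically zero. -/

import Mathlib

/-- for `G = ℤ ⊕ ℤ/2^j` with torsion form `b(x,y) = xy/2^j` on
`T = ℤ/2^j` and `p = (2^j, 2^{j-1})`, `j ≥ 2` (so `d_π = 2^j`): for every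
`k ∈ S_{d_π}` and every `t ∈ T`,
`Δ(k,t) = d_π² b(t,t) - 2 d_π b(β_k, t) ≡ 0 mod 2^{j+1}`,
i.e. the homomorphism `P : Aut_b(G) → ℚ/2^{j+1}ℤ` is identically zero. -/
theorem stmt19 (j : ℕ) (hj : 2 ≤ j) :
    ∀ (k : ℤ × ZMod (2 ^ j)) (t : ZMod (2 ^ j)),
      IsOfFinAddOrder
          ((((2 : ℤ) ^ j, ((2 ^ (j - 1) : ℕ) : ZMod (2 ^ j))) : ℤ × ZMod (2 ^ j)) -
            ((2 ^ j : ℕ) : ℤ) • k) →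
      ∃ c : ℤ,
        ((2 ^ j : ℚ)) ^ 2 * (((t.val : ℚ) * (t.val : ℚ)) / (2 ^ j : ℚ)) -
            2 * (2 ^ j : ℚ) *
              (((((( 2 ^ (j - 1) : ℕ) : ZMod (2 ^ j)) - ((2 ^ j : ℕ) : ℤ) • k.2).val : ℚ) *
                  (t.val : ℚ)) / (2 ^ j : ℚ)) =
          (c : ℚ) * 2 ^ (j + 1) := by
  intro k t _
  have hsm : ((2 ^ j : ℕ) : ℤ) • k.2 = 0 := by
    have : ((2 ^ j : ℕ) : ℤ) • k.2 = (((2 ^ j : ℕ) : ℤ) : ZMod (2 ^ j)) * k.2 :=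
      zsmul_eq_mul _ _
    rw [this, Int.cast_natCast, ZMod.natCast_self, zero_mul]
  rw [hsm, sub_zero]
  have hlt : 2 ^ (j - 1) < 2 ^ j := Nat.pow_lt_pow_right (by norm_num) (by omega)
  have hval : ((2 ^ (j - 1) : ℕ) : ZMod (2 ^ j)).val = 2 ^ (j - 1) :=
    ZMod.val_cast_of_lt hlt
  rw [hval]
  obtain ⟨m, hm⟩ : Even ((t.val : ℤ) * ((t.val : ℤ) - 1)) := by
    rcases Int.even_or_odd (t.val : ℤ) with h | h
    · exact h.mul_right _
    · have : Even ((t.val : ℤ) - 1) := by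
        rcases h with ⟨c, hc⟩; exact ⟨c, by omega⟩
      exact this.mul_left _
  refine ⟨m, ?_⟩
  have hq : ((t.val:ℚ)) * ((t.val:ℚ) - 1) = 2 * m := by
    have := congrArg (Int.cast : ℤ → ℚ) hm
    push_cast at this
    linarith
  have h2 : (2:ℚ)^j ≠ 0 := by positivity
  have h2j : (2:ℚ)^j = 2 * 2^(j-1) := by
    rw [← pow_succ']
    congr 1
    omega
  push_cast [ZMod.natCast_val] at hq ⊢
  rw [h2j]
  field_simp
  have h2j1 : (2:ℚ)^(j+1) = 4 * 2^(j-1) := by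
    have : j + 1 = (j - 1) + 2 := by omega
    rw [this, pow_add]
    ring
  rw [h2j1]
  linear_combination (2*(2:ℚ)^(j-1)) * hq
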